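/- Let a > 1 and set λ_ρ = ρ^{−a} for ρ ∈ ℕ, ρ ≥ 1. For t > 0 define S(t) = Σ_{ρ=1}^∞ 1/(1 + t/λ_ρ) = Σ_{ρ=1}^∞ 1/(1 + t ρ^a). Then S(t) is finite for every t > 0, S is continuous and strictly decreasing on (0,∞) with S(t) → ∞ as t → 0⁺ and S(t) → 0 as t → ∞; hence for every real P > 0 there is a unique t_P > 0 with S(t_P) = P. Moreover there exist constants 0 < c ≤ C and P₀ such that for all P ≥ P₀, c · P^{−a} ≤ t_P ≤ C · P^{−a}; in particular t_P is of the same order as λ_{⌈P⌉}. -/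
import Mathlib


open Filter Topology

set_option maxHeartbeats 1000000

/-- The self-consistency function `S(t) = Σ_{ρ≥1} 1/(1 + t ρ^a)` for the power-law
spectrum `λ_ρ = ρ^{−a}`. -/
noncomputable def replicaS (a : ℝ) (t : ℝ) : ℝ :=
  ∑' ρ : ℕ, 1 / (1 + t * ((ρ : ℝ) + 1) ^ a)

namespace ReplicaAux

variable {a t : ℝ}

lemma base_summable (ha : 1 < a) : Summable (fun ρ : ℕ => ((ρ : ℝ) + 1) ^ (-a)) := by
  have h : Summable (fun n : ℕ => (n : ℝ) ^ (-a)) :=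
    Real.summable_nat_rpow.mpr (by linarith)
  have h2 := (summable_nat_add_iff 1).mpr h
  simpa using h2

lemma denom_pos (ht : 0 ≤ t) (ρ : ℕ) : 0 < 1 + t * ((ρ : ℝ) + 1) ^ a := by
  have : (0:ℝ) < ((ρ : ℝ) + 1) ^ a := Real.rpow_pos_of_pos (by positivity) a
  nlinarith

lemma term_pos (ht : 0 ≤ t) (ρ : ℕ) : 0 < 1 / (1 + t * ((ρ : ℝ) + 1) ^ a) :=
  one_div_pos.mpr (denom_pos ht ρ)

lemma term_le_one (ht : 0 ≤ t) (ρ : ℕ) : 1 / (1 + t * ((ρ : ℝ) + 1) ^ a) ≤ 1 := by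
  have h : (0:ℝ) < ((ρ : ℝ) + 1) ^ a := Real.rpow_pos_of_pos (by positivity) a
  rw [div_le_one (denom_pos ht ρ)]
  nlinarith

lemma term_le (ht : 0 < t) (ρ : ℕ) :
    1 / (1 + t * ((ρ : ℝ) + 1) ^ a) ≤ t⁻¹ * ((ρ : ℝ) + 1) ^ (-a) := by
  have hx : (0:ℝ) < ((ρ : ℝ) + 1) ^ a := Real.rpow_pos_of_pos (by positivity) a
  have hD : 0 < t * ((ρ : ℝ) + 1) ^ a := by positivity
  have h1 : 1 / (1 + t * ((ρ : ℝ) + 1) ^ a) ≤ 1 / (t * ((ρ : ℝ) + 1) ^ a) :=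
    one_div_le_one_div_of_le hD (by linarith)
  have h2 : (1:ℝ) / (t * ((ρ : ℝ) + 1) ^ a) = t⁻¹ * ((ρ : ℝ) + 1) ^ (-a) := by
    rw [Real.rpow_neg (by positivity)]
    field_simp
  linarith [h1, h2.le]

lemma summable' (ha : 1 < a) (ht : 0 < t) :
    Summable (fun ρ : ℕ => 1 / (1 + t * ((ρ : ℝ) + 1) ^ a)) :=
  Summable.of_nonneg_of_le (fun ρ => (term_pos ht.le ρ).le) (term_le ht)
    ((base_summable ha).mul_left t⁻¹)

lemma tail_le (ha : 1 < a) {N : ℕ} (hN : 1 ≤ N) :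
    ∑' k : ℕ, ((N : ℝ) + (k : ℝ) + 1) ^ (-a) ≤ (N : ℝ) ^ (1 - a) / (a - 1) := by
  have hN0 : (0:ℝ) < N := by exact_mod_cast hN
  apply Real.tsum_le_of_sum_range_le (fun k => Real.rpow_nonneg (by positivity) _)
  intro m
  have hanti : AntitoneOn (fun x : ℝ => x ^ (-a)) (Set.Icc (N:ℝ) ((N:ℝ) + m)) := by
    intro x hx y hy hxy
    exact Real.rpow_le_rpow_of_nonpos (lt_of_lt_of_le hN0 hx.1) hxy (by linarith)
  have hsum := hanti.sum_le_integral
  have hle : ∑ i ∈ Finset.range m, ((N : ℝ) + (i : ℝ) + 1) ^ (-a) ≤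
      ∫ x in (N:ℝ)..(N:ℝ) + m, x ^ (-a) := by
    refine le_trans (le_of_eq ?_) hsum
    apply Finset.sum_congr rfl
    intro i _
    push_cast
    ring_nf
  refine hle.trans ?_
  have h0 : (0:ℝ) ∉ Set.uIcc (N:ℝ) ((N:ℝ) + m) := by
    rw [Set.uIcc_of_le (by linarith [Nat.cast_nonneg (α := ℝ) m])]
    rintro ⟨h1, -⟩
    linarith
  rw [integral_rpow (Or.inr ⟨by intro h; apply (by linarith : a ≠ 1); linarith, h0⟩)]
  have hnm : (0:ℝ) ≤ ((N:ℝ) + m) ^ (-a + 1) := Real.rpow_nonneg (by positivity) _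
  have ha1 : (0:ℝ) < a - 1 := by linarith
  rw [show (-a + 1 : ℝ) = 1 - a by ring]
  have h1 : (0:ℝ) ≤ ((N:ℝ) + m) ^ (1 - a) := Real.rpow_nonneg (by positivity) _
  have key : (((N:ℝ) + m) ^ (1 - a) - (N:ℝ) ^ (1 - a)) / (1 - a)
      = ((N:ℝ) ^ (1 - a) - ((N:ℝ) + m) ^ (1 - a)) / (a - 1) := by
    rw [← neg_sub ((N:ℝ) ^ (1 - a)), ← neg_sub (a : ℝ) 1, neg_div_neg_eq]
  rw [key]
  exact (div_le_div_iff_of_pos_right ha1).mpr (by linarith)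

lemma S_upper (ha : 1 < a) (ht : 0 < t) (ht1 : t ≤ 1) :
    replicaS a t ≤ (2 + 1/(a-1)) * t ^ (-1/a) := by
  have ha0 : (0:ℝ) < a := by linarith
  have he : (-1/a : ℝ) ≤ 0 := by
    rw [neg_div]
    have : (0:ℝ) ≤ 1/a := by positivity
    linarith
  set x := t ^ (-1/a) with hxdef
  have hx0 : 0 < x := Real.rpow_pos_of_pos ht _
  have hx1 : 1 ≤ x := Real.one_le_rpow_of_pos_of_le_one_of_nonpos ht ht1 he
  have hxa : x ^ a = t⁻¹ := by
    rw [hxdef, ← Real.rpow_mul ht.le, show (-1/a*a : ℝ) = -1 by field_simp,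
      Real.rpow_neg_one]
  set N := ⌈x⌉₊ with hNdef
  have hN1 : 1 ≤ N := Nat.one_le_ceil_iff.mpr hx0
  have hNx : x ≤ N := Nat.le_ceil x
  have hN2 : (N:ℝ) ≤ 2*x := by
    have := Nat.ceil_lt_add_one hx0.le
    linarith
  have hs : Summable (fun ρ : ℕ => 1 / (1 + t * ((ρ : ℝ) + 1) ^ a)) := summable' ha ht
  have hsplit := Summable.sum_add_tsum_nat_add (f := fun ρ : ℕ => 1 / (1 + t * ((ρ : ℝ) + 1) ^ a)) N hs
  have hhead : ∑ i ∈ Finset.range N, 1 / (1 + t * ((i : ℝ) + 1) ^ a) ≤ (N:ℝ) := by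
    calc ∑ i ∈ Finset.range N, 1 / (1 + t * ((i : ℝ) + 1) ^ a)
        ≤ ∑ i ∈ Finset.range N, (1:ℝ) := Finset.sum_le_sum (fun i _ => term_le_one ht.le i)
      _ = (N:ℝ) := by simp
  have hshift1 : Summable (fun k : ℕ => 1 / (1 + t * (((k + N : ℕ) : ℝ) + 1) ^ a)) :=
    (summable_nat_add_iff N).mpr hs
  have hshift2 : Summable (fun k : ℕ => t⁻¹ * (((k + N : ℕ) : ℝ) + 1) ^ (-a)) :=
    (summable_nat_add_iff N).mpr ((base_summable ha).mul_left t⁻¹)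
  have htail : ∑' k : ℕ, 1 / (1 + t * (((k + N : ℕ) : ℝ) + 1) ^ a)
      ≤ t⁻¹ * ((N:ℝ) ^ (1-a) / (a-1)) := by
    calc ∑' k : ℕ, 1 / (1 + t * (((k + N : ℕ) : ℝ) + 1) ^ a)
        ≤ ∑' k : ℕ, t⁻¹ * (((k + N : ℕ) : ℝ) + 1) ^ (-a) :=
          Summable.tsum_le_tsum (fun k => term_le ht (k + N)) hshift1 hshift2
      _ = ∑' k : ℕ, t⁻¹ * ((N:ℝ) + (k:ℝ) + 1) ^ (-a) := by
          apply tsum_congr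
          intro k
          congr 2
          push_cast
          ring
      _ = t⁻¹ * ∑' k : ℕ, ((N:ℝ) + (k:ℝ) + 1) ^ (-a) := tsum_mul_left
      _ ≤ t⁻¹ * ((N:ℝ) ^ (1-a) / (a-1)) :=
          mul_le_mul_of_nonneg_left (tail_le ha hN1) (inv_nonneg.mpr ht.le)
  have hbound : t⁻¹ * ((N:ℝ)^(1-a)/(a-1)) ≤ x / (a-1) := by
    have hNa : (N:ℝ)^(1-a) ≤ x^(1-a) :=
      Real.rpow_le_rpow_of_nonpos hx0 hNx (by linarith)
    have hxx : t⁻¹ * x^(1-a) = x := by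
      rw [← hxa, ← Real.rpow_add hx0]
      norm_num
    have h1 : t⁻¹ * ((N:ℝ)^(1-a)/(a-1)) ≤ t⁻¹ * (x^(1-a)/(a-1)) := by
      apply mul_le_mul_of_nonneg_left _ (inv_nonneg.mpr ht.le)
      exact (div_le_div_iff_of_pos_right (by linarith)).mpr hNa
    calc t⁻¹ * ((N:ℝ)^(1-a)/(a-1)) ≤ t⁻¹ * (x^(1-a)/(a-1)) := h1
      _ = (t⁻¹ * x^(1-a))/(a-1) := by ring
      _ = x/(a-1) := by rw [hxx]
  have hfinal : replicaS a t ≤ (N:ℝ) + x/(a-1) := by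
    rw [replicaS, ← hsplit]
    have := htail.trans hbound
    linarith
  calc replicaS a t ≤ (N:ℝ) + x/(a-1) := hfinal
    _ ≤ 2*x + x/(a-1) := by linarith
    _ = (2 + 1/(a-1)) * x := by ring

lemma S_lower (ha : 1 < a) (ht : 0 < t) (ht2 : t ≤ (2:ℝ) ^ (-a)) :
    t ^ (-1/a) / 4 ≤ replicaS a t := by
  have ha0 : (0:ℝ) < a := by linarith
  have he : (-1/a : ℝ) ≤ 0 := by
    rw [neg_div]
    have : (0:ℝ) ≤ 1/a := by positivity
    linarith
  set x := t ^ (-1/a) with hxdef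
  have hx0 : 0 < x := Real.rpow_pos_of_pos ht _
  have hxa : x ^ a = t⁻¹ := by
    rw [hxdef, ← Real.rpow_mul ht.le, show (-1/a*a : ℝ) = -1 by field_simp,
      Real.rpow_neg_one]
  have hx2 : 2 ≤ x := by
    have h := Real.rpow_le_rpow_of_nonpos ht ht2 he
    have h2 : ((2:ℝ) ^ (-a)) ^ (-1/a) = 2 := by
      rw [← Real.rpow_mul (by norm_num : (0:ℝ) ≤ 2),
        show (-a * (-1/a) : ℝ) = 1 by field_simp, Real.rpow_one]
    rw [h2] at h
    exact h
  set M := ⌊x⌋₊ with hMdef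
  have hM1 : (M:ℝ) ≤ x := Nat.floor_le hx0.le
  have hM2 : x - 1 < (M:ℝ) := Nat.sub_one_lt_floor x
  have hterm : ∀ i ∈ Finset.range M, (1:ℝ)/2 ≤ 1 / (1 + t * ((i : ℝ) + 1) ^ a) := by
    intro i hi
    have hi' : (i:ℝ) + 1 ≤ x := by
      have h1 : (i:ℕ) + 1 ≤ M := Finset.mem_range.mp hi
      have h2 : ((i:ℝ) + 1) ≤ (M:ℝ) := by exact_mod_cast h1
      linarith
    have hpow : ((i:ℝ)+1)^a ≤ x^a := Real.rpow_le_rpow (by positivity) hi' ha0.le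
    have hD : t * ((i:ℝ)+1)^a ≤ 1 := by
      calc t * ((i:ℝ)+1)^a ≤ t * x^a := mul_le_mul_of_nonneg_left hpow ht.le
        _ = 1 := by rw [hxa]; field_simp
    have := one_div_le_one_div_of_le (denom_pos ht.le i) (by linarith : 1 + t * ((i : ℝ) + 1) ^ a ≤ 2)
    linarith
  have hsum : (M:ℝ) * (1/2) ≤ ∑ i ∈ Finset.range M, 1 / (1 + t * ((i : ℝ) + 1) ^ a) := by
    have := Finset.card_nsmul_le_sum (Finset.range M) _ ((1:ℝ)/2) hterm
    simpa [nsmul_eq_mul, mul_comm] using this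
  have hle := Summable.sum_le_tsum (Finset.range M) (fun i _ => (term_pos ht.le i).le) (summable' ha ht)
  have : replicaS a t = ∑' ρ : ℕ, 1 / (1 + t * ((ρ : ℝ) + 1) ^ a) := rfl
  rw [this]
  calc x/4 ≤ (M:ℝ)*(1/2) := by linarith
    _ ≤ ∑ i ∈ Finset.range M, 1 / (1 + t * ((i : ℝ) + 1) ^ a) := hsum
    _ ≤ ∑' ρ : ℕ, 1 / (1 + t * ((ρ : ℝ) + 1) ^ a) := hle

end ReplicaAux

/-- For a power-law spectrum `λ_ρ = ρ^{−a}` with `a > 1`, the sum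
`S(t) = Σ_ρ 1/(1 + t/λ_ρ)` is finite, continuous and strictly decreasing on `(0,∞)`,
blows up as `t → 0⁺` and vanishes as `t → ∞`; hence for every `P > 0` there is a
unique `t_P > 0` with `S(t_P) = P`, and `t_P ≍ P^{−a}` for large `P` — the order of
the rank-`P` eigenvalue. -/
theorem replica_self_consistent_scale
    (a : ℝ) (ha : 1 < a) :
    (∀ t : ℝ, 0 < t → Summable (fun ρ : ℕ => 1 / (1 + t * ((ρ : ℝ) + 1) ^ a))) ∧
    ContinuousOn (replicaS a) (Set.Ioi 0) ∧
    StrictAntiOn (replicaS a) (Set.Ioi 0) ∧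
    Tendsto (replicaS a) (nhdsWithin 0 (Set.Ioi 0)) atTop ∧
    Tendsto (replicaS a) atTop (nhds 0) ∧
    (∀ P : ℝ, 0 < P → ∃! t : ℝ, 0 < t ∧ replicaS a t = P) ∧
    ∃ c C : ℝ, 0 < c ∧ c ≤ C ∧ ∃ P₀ : ℝ, ∀ P : ℝ, P₀ ≤ P →
      ∀ t : ℝ, 0 < t → replicaS a t = P →
        c * P ^ (-a) ≤ t ∧ t ≤ C * P ^ (-a) := by
  have ha0 : (0:ℝ) < a := by linarith
  -- Summability
  have hsummable : ∀ t : ℝ, 0 < t → Summable (fun ρ : ℕ => 1 / (1 + t * ((ρ : ℝ) + 1) ^ a)) :=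
    fun t ht => ReplicaAux.summable' ha ht
  -- Continuity
  have hcont0 : ∀ ε : ℝ, 0 < ε → ContinuousOn (replicaS a) (Set.Ici ε) := by
    intro ε hε
    have hb : Summable (fun ρ : ℕ => ε⁻¹ * ((ρ:ℝ)+1)^(-a)) :=
      (ReplicaAux.base_summable ha).mul_left ε⁻¹
    have h := continuousOn_tsum (f := fun (ρ : ℕ) (t : ℝ) => 1 / (1 + t * ((ρ : ℝ) + 1) ^ a))
      (s := Set.Ici ε) ?_ hb ?_
    · exact h
    · intro ρ
      apply ContinuousOn.div continuousOn_const (by fun_prop)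
      intro u hu
      exact ne_of_gt (ReplicaAux.denom_pos (le_trans hε.le hu) ρ)
    · intro ρ u hu
      have hut : (0:ℝ) < u := lt_of_lt_of_le hε hu
      rw [Real.norm_eq_abs, abs_of_nonneg (ReplicaAux.term_pos hut.le ρ).le]
      have hc : (0:ℝ) < ((ρ:ℝ)+1)^a := Real.rpow_pos_of_pos (by positivity) a
      calc 1 / (1 + u * ((ρ : ℝ) + 1) ^ a) ≤ 1 / (1 + ε * ((ρ : ℝ) + 1) ^ a) := by
            apply one_div_le_one_div_of_le (ReplicaAux.denom_pos hε.le ρ)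
            have hεu : ε ≤ u := hu
            nlinarith [mul_le_mul_of_nonneg_right hεu hc.le]
        _ ≤ ε⁻¹ * ((ρ:ℝ)+1)^(-a) := ReplicaAux.term_le hε ρ
  have hcont : ContinuousOn (replicaS a) (Set.Ioi 0) := by
    intro t ht
    have ht0 : (0:ℝ) < t := ht
    have h := (hcont0 (t/2) (by linarith)).continuousAt (Ici_mem_nhds (show t/2 < t by linarith))
    exact h.continuousWithinAt
  -- Strict antitonicity
  have hanti : StrictAntiOn (replicaS a) (Set.Ioi 0) := by
    intro s hs t ht hst
    have hs0 : (0:ℝ) < s := hs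
    have ht0 : (0:ℝ) < t := ht
    apply Summable.tsum_lt_tsum_of_nonneg (i := 0)
    · exact fun ρ => (ReplicaAux.term_pos ht0.le ρ).le
    · intro ρ
      apply one_div_le_one_div_of_le (ReplicaAux.denom_pos hs0.le ρ)
      have hc : (0:ℝ) < ((ρ:ℝ)+1)^a := Real.rpow_pos_of_pos (by positivity) a
      nlinarith
    · apply one_div_lt_one_div_of_lt (ReplicaAux.denom_pos hs0.le 0)
      have hc : (0:ℝ) < (((0:ℕ):ℝ)+1)^a := Real.rpow_pos_of_pos (by positivity) a
      nlinarith
    · exact ReplicaAux.summable' ha hs0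
  -- Blow-up at 0⁺
  have h4 : Tendsto (replicaS a) (nhdsWithin 0 (Set.Ioi 0)) atTop := by
    rw [tendsto_atTop]
    intro b
    set N : ℕ := max 1 ⌈2*b⌉₊ with hNdef
    have hN1 : 1 ≤ N := le_max_left _ _
    have hN0 : (0:ℝ) < N := by exact_mod_cast hN1
    have hNb : 2*b ≤ (N:ℝ) := by
      refine le_trans (Nat.le_ceil _) ?_
      exact_mod_cast le_max_right 1 ⌈2*b⌉₊
    have hmem : Set.Ioc 0 ((N:ℝ)^(-a)) ∈ nhdsWithin (0:ℝ) (Set.Ioi 0) :=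
      Ioc_mem_nhdsGT_of_mem ⟨le_refl 0, Real.rpow_pos_of_pos hN0 _⟩
    filter_upwards [hmem] with t htt
    obtain ⟨ht0, htN⟩ := htt
    have hterm : ∀ i ∈ Finset.range N, (1:ℝ)/2 ≤ 1 / (1 + t * ((i : ℝ) + 1) ^ a) := by
      intro i hi
      have h1 : (i:ℕ) + 1 ≤ N := Finset.mem_range.mp hi
      have hi1 : (i:ℝ) + 1 ≤ (N:ℝ) := by exact_mod_cast h1
      have hpow : ((i:ℝ)+1)^a ≤ (N:ℝ)^a := Real.rpow_le_rpow (by positivity) hi1 ha0.le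
      have hD : t * ((i:ℝ)+1)^a ≤ 1 := by
        calc t * ((i:ℝ)+1)^a ≤ (N:ℝ)^(-a) * (N:ℝ)^a := by
              apply mul_le_mul htN hpow (Real.rpow_nonneg (by positivity) _)
                (Real.rpow_nonneg hN0.le _)
          _ = 1 := by rw [← Real.rpow_add hN0]; norm_num
      have := one_div_le_one_div_of_le (ReplicaAux.denom_pos ht0.le i)
        (by linarith : 1 + t * ((i : ℝ) + 1) ^ a ≤ 2)
      linarith
    have hsum : (N:ℝ) * (1/2) ≤ ∑ i ∈ Finset.range N, 1 / (1 + t * ((i : ℝ) + 1) ^ a) := by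
      have := Finset.card_nsmul_le_sum (Finset.range N) _ ((1:ℝ)/2) hterm
      simpa [nsmul_eq_mul, mul_comm] using this
    have hle := Summable.sum_le_tsum (Finset.range N) (fun i _ => (ReplicaAux.term_pos ht0.le i).le)
      (ReplicaAux.summable' ha ht0)
    have hrepl : replicaS a t = ∑' ρ : ℕ, 1 / (1 + t * ((ρ : ℝ) + 1) ^ a) := rfl
    rw [hrepl]
    calc b ≤ (N:ℝ)*(1/2) := by linarith
      _ ≤ ∑ i ∈ Finset.range N, 1 / (1 + t * ((i : ℝ) + 1) ^ a) := hsum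
      _ ≤ ∑' ρ : ℕ, 1 / (1 + t * ((ρ : ℝ) + 1) ^ a) := hle
  -- Decay at ∞
  have h5 : Tendsto (replicaS a) atTop (nhds 0) := by
    have hK : Summable (fun ρ : ℕ => ((ρ:ℝ)+1)^(-a)) := ReplicaAux.base_summable ha
    set K := ∑' ρ : ℕ, ((ρ:ℝ)+1)^(-a) with hKdef
    apply squeeze_zero' (g := fun t : ℝ => t⁻¹ * K)
    · filter_upwards [eventually_gt_atTop (0:ℝ)] with t ht
      exact tsum_nonneg fun ρ => (ReplicaAux.term_pos ht.le ρ).le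
    · filter_upwards [eventually_gt_atTop (0:ℝ)] with t ht
      calc replicaS a t ≤ ∑' ρ : ℕ, t⁻¹ * ((ρ:ℝ)+1)^(-a) :=
            Summable.tsum_le_tsum (ReplicaAux.term_le ht) (ReplicaAux.summable' ha ht) (hK.mul_left t⁻¹)
        _ = t⁻¹ * K := tsum_mul_left
    · simpa using tendsto_inv_atTop_zero.mul_const K
  -- Unique solution
  have h6 : ∀ P : ℝ, 0 < P → ∃! t : ℝ, 0 < t ∧ replicaS a t = P := by
    intro P hP
    obtain ⟨t₁, ht₁S, ht₁0⟩ : ∃ t₁, P ≤ replicaS a t₁ ∧ t₁ ∈ Set.Ioi (0:ℝ) := by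
      have hev := (tendsto_atTop.mp h4) P
      exact (hev.and self_mem_nhdsWithin).exists
    have ht₁0' : (0:ℝ) < t₁ := ht₁0
    obtain ⟨t₂, ht₁₂, ht₂P⟩ : ∃ t₂, t₁ ≤ t₂ ∧ replicaS a t₂ < P := by
      have hev2 : ∀ᶠ t in atTop, replicaS a t < P := h5.eventually (gt_mem_nhds hP)
      exact ((eventually_ge_atTop t₁).and hev2).exists
    have hsub : Set.Icc t₁ t₂ ⊆ Set.Ioi 0 := fun y hy => lt_of_lt_of_le ht₁0' hy.1
    have hIVT := intermediate_value_Icc' ht₁₂ (hcont.mono hsub)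
    obtain ⟨t, htmem, htP⟩ := hIVT ⟨ht₂P.le, ht₁S⟩
    have ht0 : (0:ℝ) < t := lt_of_lt_of_le ht₁0' htmem.1
    refine ⟨t, ⟨ht0, htP⟩, ?_⟩
    rintro y ⟨hy0, hyP⟩
    exact hanti.injOn hy0 ht0 (by rw [hyP, htP])
  refine ⟨hsummable, hcont, hanti, h4, h5, h6, ?_⟩
  -- Scale of the solution
  set C₁ : ℝ := 2 + 1/(a-1) with hC₁def
  have hC₁2 : (2:ℝ) ≤ C₁ := by
    have h : (0:ℝ) < 1/(a-1) := div_pos one_pos (by linarith)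
    rw [hC₁def]
    linarith
  refine ⟨(4:ℝ)^(-a), C₁^a, Real.rpow_pos_of_pos (by norm_num) _, ?_,
    max 1 (replicaS a ((2:ℝ)^(-a))), ?_⟩
  · calc (4:ℝ)^(-a) ≤ 1 := Real.rpow_le_one_of_one_le_of_nonpos (by norm_num) (by linarith)
      _ = (1:ℝ)^a := (Real.one_rpow a).symm
      _ ≤ C₁^a := Real.rpow_le_rpow (by norm_num) (by linarith) ha0.le
  · intro P hP t ht htS
    have hP1 : (1:ℝ) ≤ P := le_trans (le_max_left _ _) hP
    have hP0 : (0:ℝ) < P := by linarith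
    have h2a : (0:ℝ) < (2:ℝ)^(-a) := Real.rpow_pos_of_pos (by norm_num) _
    have ht2 : t ≤ (2:ℝ)^(-a) := by
      by_contra hcon
      push_neg at hcon
      have hlt := hanti (Set.mem_Ioi.mpr h2a) (Set.mem_Ioi.mpr ht) hcon
      have hle : replicaS a ((2:ℝ)^(-a)) ≤ P := le_trans (le_max_right _ _) hP
      rw [htS] at hlt
      linarith
    have ht1 : t ≤ 1 :=
      le_trans ht2 (Real.rpow_le_one_of_one_le_of_nonpos (by norm_num) (by linarith))
    set x := t ^ (-1/a) with hxdef
    have hx0 : 0 < x := Real.rpow_pos_of_pos ht _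
    have hxa : x ^ a = t⁻¹ := by
      rw [hxdef, ← Real.rpow_mul ht.le, show (-1/a*a : ℝ) = -1 by field_simp,
        Real.rpow_neg_one]
    have hlow := ReplicaAux.S_lower ha ht ht2
    have hup := ReplicaAux.S_upper ha ht ht1
    rw [htS] at hlow hup
    have hx4 : x ≤ 4*P := by linarith
    have hPC : P ≤ C₁ * x := hup
    have htx : t = (x ^ a)⁻¹ := by rw [hxa, inv_inv]
    constructor
    · have h1 : x ^ a ≤ (4*P) ^ a := Real.rpow_le_rpow hx0.le hx4 ha0.le
      have h3 : ((4*P)^a)⁻¹ ≤ (x^a)⁻¹ := by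
        apply inv_anti₀ (Real.rpow_pos_of_pos hx0 a) h1
      have h5' : (4:ℝ)^(-a) * P^(-a) = ((4*P)^a)⁻¹ := by
        rw [Real.mul_rpow (by norm_num) hP0.le, Real.rpow_neg (by norm_num),
          Real.rpow_neg hP0.le, mul_inv]
      rw [h5', htx]
      exact h3
    · have h1 : P ^ a ≤ (C₁ * x) ^ a := Real.rpow_le_rpow hP0.le hPC ha0.le
      have h2 : (C₁*x)^a = C₁^a * x^a := Real.mul_rpow (by linarith) hx0.le
      rw [h2, hxa] at h1
      have hPa : (0:ℝ) < P^a := Real.rpow_pos_of_pos hP0 a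
      have h3 : P^a * t ≤ C₁^a := by
        calc P^a * t ≤ (C₁^a * t⁻¹) * t := mul_le_mul_of_nonneg_right h1 ht.le
          _ = C₁^a := by field_simp
      have h4' : t ≤ C₁^a / P^a := by
        rw [le_div_iff₀ hPa]
        exact (mul_comm t (P ^ a)).trans_le h3
      rw [Real.rpow_neg hP0.le, ← div_eq_mul_inv]
      exact h4'
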